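/- Suppose ψ₀, ψ₁, …, ψ_m : [0,∞) → ℝ are continuously differentiable and satisfy ψᵢ(t) = ψ̇_{i-1}(t) + p·ψ_{i-1}(t) for i = 1,…,m with p > 0. If ψᵢ(0) ≥ 0 for all i ∈ {0,…,m−1} and ψ_m(t) ≥ 0 for all t ≥ 0, then ψᵢ(t) ≥ 0 for all t ≥ 0 and all i ∈ {0,…,m−1}; in particular ψ₀(t) = b(t) ≥ 0 for all t ≥ 0. -/

import Mathlib

lemma hocbf_step (p : ℝ) (hp : 0 < p) (f : ℝ → ℝ) (hf : ContDiff ℝ 1 f)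
    (h0 : 0 ≤ f 0) (hd : ∀ t : ℝ, 0 ≤ t → 0 ≤ deriv f t + p * f t) :
    ∀ t : ℝ, 0 ≤ t → 0 ≤ f t := by
  intro t ht
  set g : ℝ → ℝ := fun s => Real.exp (p * s) * f s with hg
  have hfd : Differentiable ℝ f := hf.differentiable one_ne_zero
  have hgd : ∀ s : ℝ, HasDerivAt g (Real.exp (p * s) * (deriv f s + p * f s)) s := by
    intro s
    have h1 : HasDerivAt (fun s : ℝ => Real.exp (p * s)) (Real.exp (p * s) * p) s := by
      have := (Real.hasDerivAt_exp (p * s)).comp s ((hasDerivAt_id s).const_mul p)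
      simpa [mul_comm, Function.comp_def] using this
    have h2 := (hfd s).hasDerivAt
    have := h1.fun_mul h2
    exact this.congr_deriv (by ring)
  have hmono : MonotoneOn g (Set.Ici (0 : ℝ)) := by
    apply monotoneOn_of_deriv_nonneg (convex_Ici 0)
    · exact ((Real.continuous_exp.comp (continuous_const.mul continuous_id)).mul
        hfd.continuous).continuousOn
    · exact fun s hs => ((hgd s).differentiableAt).differentiableWithinAt
    · intro s hs
      rw [interior_Ici] at hs
      rw [(hgd s).deriv]
      exact mul_nonneg (Real.exp_pos _).le (hd s (le_of_lt hs))
  have hge : g 0 ≤ g t := hmono (Set.self_mem_Ici) ht ht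
  have hg0 : g 0 = f 0 := by simp [hg]
  have : 0 ≤ Real.exp (p * t) * f t := by
    calc 0 ≤ f 0 := h0
    _ = g 0 := hg0.symm
    _ ≤ g t := hge
  exact nonneg_of_mul_nonneg_right this (Real.exp_pos _)


/-- HOCBF forward invariance along a trajectory with linear class K functions:
if `ψ_{i+1} = ψ̇ᵢ + p·ψᵢ`, `ψᵢ(0) ≥ 0` for `i < m`, and `ψ_m(t) ≥ 0` for all
`t ≥ 0`, then `ψᵢ(t) ≥ 0` for all `t ≥ 0` and all `i < m`; in particular
`ψ₀ = b` stays nonnegative. -/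
theorem hocbf_chain_invariance (m : ℕ) (ψ : ℕ → ℝ → ℝ) (p : ℝ) (hp : 0 < p)
    (hsmooth : ∀ i ≤ m, ContDiff ℝ 1 (ψ i))
    (hrec : ∀ i < m, ∀ t : ℝ, ψ (i + 1) t = deriv (ψ i) t + p * ψ i t)
    (h0 : ∀ i < m, 0 ≤ ψ i 0)
    (hm : ∀ t : ℝ, 0 ≤ t → 0 ≤ ψ m t) :
    ∀ i < m, ∀ t : ℝ, 0 ≤ t → 0 ≤ ψ i t := by
  have key : ∀ d i, i + d = m → ∀ t : ℝ, 0 ≤ t → 0 ≤ ψ i t := by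
    intro d
    induction d with
    | zero => intro i hi; simpa [hi.symm] using fun t ht => hm t ht
    | succ d ih =>
      intro i hi t ht
      have him : i < m := by omega
      have hnext : ∀ s : ℝ, 0 ≤ s → 0 ≤ ψ (i + 1) s := ih (i + 1) (by omega)
      refine hocbf_step p hp (ψ i) (hsmooth i him.le) (h0 i him) ?_ t ht
      intro s hs
      have := hnext s hs
      rwa [hrec i him s] at this
  intro i hi t ht
  exact key (m - i) i (by omega) t ht
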